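/- There exists a subgroup Γ of GL₂(ℂ) that has bounded finite subgroups (indeed, is free abelian, so its only finite subgroup is trivial), whose image in PGL₂(ℂ) contains finite cyclic subgroups of arbitrarily large order. -/

import Mathlib

open Matrix Complex

noncomputable def dvec (q : ℚ) : Fin 2 → ℂ :=
  ![Complex.exp ((1 + 2 * Real.pi * Complex.I) * q), Complex.exp q]

noncomputable def dmat (q : ℚ) : Matrix (Fin 2) (Fin 2) ℂ := Matrix.diagonal (dvec q)

lemma dvec_mul (q r : ℚ) : dvec q * dvec r = dvec (q + r) := by
  funext i
  fin_cases i <;>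
    simp [dvec, ← Complex.exp_add] <;> ring_nf

lemma dmat_mul (q r : ℚ) : dmat q * dmat r = dmat (q + r) := by
  rw [dmat, dmat, dmat, Matrix.diagonal_mul_diagonal]
  exact congrArg _ (dvec_mul q r)

lemma dvec_zero : dvec 0 = 1 := by
  funext i; fin_cases i <;> simp [dvec]

lemma dmat_zero : dmat 0 = 1 := by
  rw [dmat, dvec_zero]; exact Matrix.diagonal_one

noncomputable def dgl (q : ℚ) : GL (Fin 2) ℂ :=
  ⟨dmat q, dmat (-q), by rw [dmat_mul, add_neg_cancel, dmat_zero],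
    by rw [dmat_mul, neg_add_cancel, dmat_zero]⟩

lemma dgl_mul (q r : ℚ) : dgl q * dgl r = dgl (q + r) := by
  apply Units.ext
  exact dmat_mul q r

lemma dgl_zero : dgl 0 = 1 := by
  apply Units.ext; exact dmat_zero

lemma dgl_pow (q : ℚ) (n : ℕ) : (dgl q) ^ n = dgl (n * q) := by
  induction n with
  | zero => simp [dgl_zero]
  | succ n ih => rw [pow_succ, ih, dgl_mul]; push_cast; ring_nf

lemma dgl_eq_one {q : ℚ} (h : dgl q = 1) : q = 0 := by
  have h1 : dmat q = 1 := congrArg Units.val h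
  have h2 : Complex.exp q = 1 := by
    have := congrFun (congrFun h1 1) 1
    simpa [dmat, dvec, Matrix.diagonal] using this
  have h3 : Complex.exp ((q : ℝ) : ℂ) = 1 := by push_cast at h2 ⊢; exact h2
  rw [← Complex.ofReal_exp] at h3
  have h4 : Real.exp q = 1 := by exact_mod_cast h3
  rw [← Real.exp_zero] at h4
  have h5 : (q : ℝ) = 0 := Real.exp_injective h4
  exact_mod_cast h5

lemma dmat_one_scalar : dmat 1 = Matrix.scalar (Fin 2) (Complex.exp 1) := by
  have h : Complex.exp (1 + 2 * Real.pi * Complex.I) = Complex.exp 1 := by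
    rw [Complex.exp_add, Complex.exp_two_pi_mul_I, mul_one]
  funext i j
  fin_cases i <;> fin_cases j <;>
    simp [dmat, dvec, Matrix.diagonal, Matrix.scalar, h]

lemma dgl_one_mem_center : dgl 1 ∈ Subgroup.center (GL (Fin 2) ℂ) := by
  rw [Subgroup.mem_center_iff]
  intro g
  apply Units.ext
  show (g : Matrix (Fin 2) (Fin 2) ℂ) * dmat 1 = dmat 1 * (g : Matrix (Fin 2) (Fin 2) ℂ)
  rw [dmat_one_scalar]
  have hc := Matrix.scalar_commute (n := Fin 2) (α := ℂ) (Complex.exp 1)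
    (fun r => mul_comm _ r) (g : Matrix (Fin 2) (Fin 2) ℂ)
  exact hc.symm.eq

noncomputable def Egl : GL (Fin 2) ℂ :=
  ⟨!![1,1;0,1], !![1,-1;0,1],
    by ext i j; fin_cases i <;> fin_cases j <;> simp [Matrix.mul_apply, Fin.sum_univ_two],
    by ext i j; fin_cases i <;> fin_cases j <;> simp [Matrix.mul_apply, Fin.sum_univ_two]⟩

lemma dgl_mem_center {q : ℚ} (h : dgl q ∈ Subgroup.center (GL (Fin 2) ℂ)) :
    Complex.exp (2 * Real.pi * Complex.I * q) = 1 := by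
  rw [Subgroup.mem_center_iff] at h
  have h1 := h Egl
  have h2 : (Egl : Matrix (Fin 2) (Fin 2) ℂ) * dmat q = dmat q * (Egl : Matrix (Fin 2) (Fin 2) ℂ) :=
    congrArg Units.val h1
  have h3 := congrFun (congrFun h2 0) 1
  have h4 : Complex.exp q = Complex.exp ((1 + 2 * Real.pi * Complex.I) * q) := by
    simpa [Egl, dmat, dvec, Matrix.mul_apply, Fin.sum_univ_two, Matrix.diagonal] using h3
  have h5 : Complex.exp ((1 + 2 * Real.pi * Complex.I) * q)
      = Complex.exp q * Complex.exp (2 * Real.pi * Complex.I * q) := by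
    rw [← Complex.exp_add]; ring_nf
  rw [h5] at h4
  have := Complex.exp_ne_zero (q : ℂ)
  field_simp at h4
  exact h4.symm

theorem exists_bfs_subgroup_with_unbounded_image :
    ∃ Γ : Subgroup (GL (Fin 2) ℂ),
      (∀ H : Subgroup (GL (Fin 2) ℂ), H ≤ Γ → Finite H → H = ⊥) ∧
      (∀ k : ℕ, ∃ g ∈ Subgroup.map
          (QuotientGroup.mk' (Subgroup.center (GL (Fin 2) ℂ))) Γ,
        0 < orderOf g ∧ k ≤ orderOf g) := by
  refine ⟨{ carrier := Set.range dgl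
            one_mem' := ⟨0, dgl_zero⟩
            mul_mem' := ?_
            inv_mem' := ?_ }, ?_, ?_⟩
  · rintro a b ⟨q, rfl⟩ ⟨r, rfl⟩
    exact ⟨q + r, (dgl_mul q r).symm⟩
  · rintro a ⟨q, rfl⟩
    refine ⟨-q, eq_inv_of_mul_eq_one_left ?_⟩
    rw [dgl_mul, neg_add_cancel, dgl_zero]
  · -- finite subgroups are trivial
    intro H hH hFin
    rw [Subgroup.eq_bot_iff_forall]
    intro x hx
    obtain ⟨q, rfl⟩ := hH hx
    set y : H := ⟨dgl q, hx⟩ with hy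
    have hn : 0 < orderOf y := orderOf_pos y
    have hpow : (dgl q) ^ (orderOf y) = 1 := by
      have := pow_orderOf_eq_one y
      have h2 : ((y ^ orderOf y : H) : GL (Fin 2) ℂ) = ((1 : H) : GL (Fin 2) ℂ) := by
        rw [this]
      rw [Subgroup.coe_pow] at h2; exact h2
    rw [dgl_pow] at hpow
    have hq0 : (orderOf y : ℚ) * q = 0 := dgl_eq_one hpow
    have : q = 0 := by
      rcases mul_eq_zero.mp hq0 with h | h
      · exact absurd h (by positivity)
      · exact h
    rw [this, dgl_zero]
  · -- arbitrarily large orders in the image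
    intro k
    set m : ℕ := k + 1 with hm
    have hm0 : (m : ℚ) ≠ 0 := by positivity
    set g := (QuotientGroup.mk' (Subgroup.center (GL (Fin 2) ℂ))) (dgl (1 / m)) with hg
    have hgm : g ^ m = 1 := by
      rw [hg, ← map_pow, dgl_pow, mul_one_div, div_self hm0]
      exact (QuotientGroup.eq_one_iff _).mpr dgl_one_mem_center
    have hfin : IsOfFinOrder g := isOfFinOrder_iff_pow_eq_one.mpr ⟨m, Nat.succ_pos k, hgm⟩
    have hpos : 0 < orderOf g := hfin.orderOf_pos
    refine ⟨g, ⟨dgl (1 / m), ⟨1 / m, rfl⟩, rfl⟩, hpos, ?_⟩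
    -- show k ≤ orderOf g by showing orderOf g = m
    set n := orderOf g with hn
    have hdvd : n ∣ m := orderOf_dvd_of_pow_eq_one hgm
    have hnle : n ≤ m := Nat.le_of_dvd (Nat.succ_pos k) hdvd
    have hgn : g ^ n = 1 := pow_orderOf_eq_one g
    have hcen : dgl ((n : ℚ) * (1 / m)) ∈ Subgroup.center (GL (Fin 2) ℂ) := by
      rw [hg, ← map_pow, dgl_pow] at hgn
      exact (QuotientGroup.eq_one_iff _).mp hgn
    have hexp := dgl_mem_center hcen
    rw [Complex.exp_eq_one_iff] at hexp
    obtain ⟨j, hj⟩ := hexp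
    have h2pi : (2 * (Real.pi : ℂ) * Complex.I) ≠ 0 := by
      simp [Real.pi_ne_zero, Complex.I_ne_zero]
    have hqj : (((n : ℚ) * (1 / m) : ℚ) : ℂ) = (j : ℂ) := by
      have : 2 * (Real.pi : ℂ) * Complex.I * (((n : ℚ) * (1 / m) : ℚ) : ℂ)
          = 2 * (Real.pi : ℂ) * Complex.I * (j : ℂ) := by
        rw [hj]; ring
      exact mul_left_cancel₀ h2pi this
    have hq : ((n : ℚ) * (1 / m) : ℚ) = (j : ℚ) := by exact_mod_cast hqj
    have hq1 : (n : ℚ) * (1 / m) = (n : ℚ) / m := by ring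
    have hnpos : (0 : ℚ) < (n : ℚ) / m := by positivity
    have hle1 : (n : ℚ) / m ≤ 1 := by
      rw [div_le_one (by positivity)]
      exact_mod_cast hnle
    rw [hq1] at hq
    have hj1 : j = 1 := by
      have h1 : (0 : ℚ) < (j : ℚ) := hq ▸ hnpos
      have h2 : ((j : ℚ)) ≤ 1 := hq ▸ hle1
      have : (0 : ℤ) < j := by exact_mod_cast h1
      have : j ≤ 1 := by exact_mod_cast h2
      omega
    have : (n : ℚ) / m = 1 := by rw [hq, hj1]; norm_num
    have hnm : (n : ℚ) = m := by field_simp at this; exact_mod_cast this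
    have : n = m := by exact_mod_cast hnm
    omega
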